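/- For every ω ≠ 0 and every t ∈ ℝ, the matrix exponential satisfies exp(t · A^{(p;ω)}_{(𝒥)}) = I + ((e^{ωt} − 1)/ω) · A^{(p;ω)}_{(𝒥)}. -/

import Mathlib

open Matrix

/-- The ratio `r_j := p_j / p_n` for `j ∈ [n-1]`, with the state space `[n]` modeled as
`Fin (m+1)`, the last state `n` as `Fin.last m`, and `[n-1]` as `Fin m` via `Fin.castSucc`. -/
noncomputable def r (m : ℕ) (p : Fin (m + 1) → ℝ) (j : Fin m) : ℝ :=
  p j.castSucc / p (Fin.last m)

/-- `e^{(p)}_{(j,k)} := (e_j − r_j e_n)(e_k^T − e_n^T)` as an `(m+1) × (m+1)` real matrix. -/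
noncomputable def Ep (m : ℕ) (p : Fin (m + 1) → ℝ) (j k : Fin m) :
    Matrix (Fin (m + 1)) (Fin (m + 1)) ℝ :=
  Matrix.vecMulVec
    (fun a => (if a = j.castSucc then (1 : ℝ) else 0) -
      r m p j * (if a = Fin.last m then (1 : ℝ) else 0))
    (fun b => (if b = k.castSucc then (1 : ℝ) else 0) - (if b = Fin.last m then (1 : ℝ) else 0))

/-- For a `d`-element subset `𝒥 = {j_1, …, j_d} ⊆ [n-1]` (given as an injective tuple
`J : Fin d → Fin m`) and a `d × d` matrix `μ`, the `n × n` matrix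
`μ^{(p)}_{(𝒥)} := Σ_{u,v} μ_{uv} e^{(p)}_{(j_u, j_v)}`. -/
noncomputable def liftJ (m d : ℕ) (p : Fin (m + 1) → ℝ) (J : Fin d → Fin m)
    (μ : Matrix (Fin d) (Fin d) ℝ) : Matrix (Fin (m + 1)) (Fin (m + 1)) ℝ :=
  ∑ u, ∑ v, μ u v • Ep m p (J u) (J v)

/-- The matrix `A^{(p;ω)}_{(𝒥)} := ω Σ_{u,v} (δ_{j_u j_v} − r_{j_v}/(1 + r_{(𝒥)} 1_d))
e^{(p)}_{(j_u, j_v)}`. -/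
noncomputable def AJ (m d : ℕ) (p : Fin (m + 1) → ℝ) (J : Fin d → Fin m) (ω : ℝ) :
    Matrix (Fin (m + 1)) (Fin (m + 1)) ℝ :=
  ω • ∑ u, ∑ v,
    ((if J u = J v then (1 : ℝ) else 0) - r m p (J v) / (1 + ∑ w, r m p (J w))) •
      Ep m p (J u) (J v)


section helpers
open Nat NormedSpace
lemma vecMulVec_mul_vecMulVec {n : Type*} [Fintype n] [DecidableEq n]
    (v w v' w' : n → ℝ) :
    vecMulVec v w * vecMulVec v' w' = (∑ c, w c * v' c) • vecMulVec v w' := by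
  ext a b
  simp only [mul_apply, vecMulVec_apply, Matrix.smul_apply, smul_eq_mul, Finset.sum_mul,
    Finset.mul_sum]
  apply Finset.sum_congr rfl
  intro c _
  ring

lemma Ep_mul (m : ℕ) (p : Fin (m + 1) → ℝ) (j k j' k' : Fin m) :
    Ep m p j k * Ep m p j' k' =
      ((if k = j' then (1 : ℝ) else 0) + r m p j') • Ep m p j k' := by
  rw [Ep, Ep, Ep, _root_.vecMulVec_mul_vecMulVec]
  congr 1
  have hkl : (k.castSucc : Fin (m+1)) ≠ Fin.last m := Fin.castSucc_lt_last k |>.ne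
  have hjl : (j'.castSucc : Fin (m+1)) ≠ Fin.last m := Fin.castSucc_lt_last j' |>.ne
  simp only [sub_mul, mul_sub, ite_mul, mul_ite, one_mul, mul_one, zero_mul, mul_zero,
    Finset.sum_sub_distrib]
  simp [Finset.sum_ite_eq, hkl, hjl, Fin.castSucc_inj, hjl.symm, eq_comm]

section core
variable (d : ℕ) (ρ : Fin d → ℝ)

-- the scalar identity
lemma key_scalar (hρ : ∀ w, 0 < ρ w) (u v' : Fin d) :
    ∑ v, ∑ u', (((if u = v then (1:ℝ) else 0) - ρ v / (1 + ∑ w, ρ w)) *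
        (((if u' = v' then (1:ℝ) else 0) - ρ v' / (1 + ∑ w, ρ w)) *
          ((if v = u' then (1:ℝ) else 0) + ρ u')))
      = (if u = v' then (1:ℝ) else 0) - ρ v' / (1 + ∑ w, ρ w) := by
  set T : ℝ := 1 + ∑ w, ρ w with hT
  have hTpos : 0 < T := by
    have : 0 ≤ ∑ w, ρ w := Finset.sum_nonneg fun w _ => (hρ w).le
    linarith
  have hT0 : T ≠ 0 := hTpos.ne'
  have inner : ∀ v : Fin d, ∑ u', (((if u' = v' then (1:ℝ) else 0) - ρ v' / T) *
      ((if v = u' then (1:ℝ) else 0) + ρ u')) = (if v = v' then (1:ℝ) else 0) := by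
    intro v
    simp only [sub_mul, mul_add, ite_mul, mul_ite, one_mul, mul_one, zero_mul, mul_zero,
      Finset.sum_sub_distrib, Finset.sum_add_distrib, Finset.sum_ite_eq, Finset.sum_ite_eq',
      Finset.mem_univ, if_true, ← Finset.mul_sum]
    have hsum : ∑ u', ρ u' = T - 1 := by rw [hT]; ring
    rw [hsum]
    field_simp
    ring
  calc ∑ v, ∑ u', (((if u = v then (1:ℝ) else 0) - ρ v / T) *
        (((if u' = v' then (1:ℝ) else 0) - ρ v' / T) *
          ((if v = u' then (1:ℝ) else 0) + ρ u')))
      = ∑ v, ((if u = v then (1:ℝ) else 0) - ρ v / T) * (if v = v' then (1:ℝ) else 0) := by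
        refine Finset.sum_congr rfl fun v _ => ?_
        rw [← Finset.mul_sum, inner v]
    _ = (if u = v' then (1:ℝ) else 0) - ρ v' / T := by
        simp [sub_mul, ite_mul, mul_ite, Finset.sum_sub_distrib, Finset.sum_ite_eq,
          Finset.sum_ite_eq']
end core

lemma S_idem (m d : ℕ) (p : Fin (m + 1) → ℝ) (hp : ∀ a, 0 < p a)
    (J : Fin d → Fin m) (hJ : Function.Injective J) :
    (∑ u, ∑ v, ((if J u = J v then (1:ℝ) else 0) - r m p (J v) / (1 + ∑ w, r m p (J w))) •
        Ep m p (J u) (J v)) *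
      (∑ u, ∑ v, ((if J u = J v then (1:ℝ) else 0) - r m p (J v) / (1 + ∑ w, r m p (J w))) •
        Ep m p (J u) (J v))
    = ∑ u, ∑ v, ((if J u = J v then (1:ℝ) else 0) - r m p (J v) / (1 + ∑ w, r m p (J w))) •
        Ep m p (J u) (J v) := by
  set ρ : Fin d → ℝ := fun w => r m p (J w) with hρdef
  have hρ : ∀ w, 0 < ρ w := fun w => div_pos (hp _) (hp _)
  set T : ℝ := 1 + ∑ w, ρ w with hT
  set M : Fin d → Fin d → ℝ := fun u v => (if u = v then (1:ℝ) else 0) - ρ v / T with hM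
  have hif : ∀ u v : Fin d, (if J u = J v then (1:ℝ) else 0) = (if u = v then (1:ℝ) else 0) := by
    intro u v; simp [hJ.eq_iff]
  simp only [hif]
  have hρ' : ∀ w, r m p (J w) = ρ w := fun _ => rfl
  have expand : ∀ (u v u' v' : Fin d),
      (M u v • Ep m p (J u) (J v)) * (M u' v' • Ep m p (J u') (J v'))
        = (M u v * (M u' v' * ((if v = u' then (1:ℝ) else 0) + ρ u'))) •
            Ep m p (J u) (J v') := by
    intro u v u' v'
    rw [smul_mul_assoc, mul_smul_comm, Ep_mul, smul_smul, smul_smul, hif, hρ']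
    congr 1
    ring
  calc (∑ u, ∑ v, M u v • Ep m p (J u) (J v)) * (∑ u, ∑ v, M u v • Ep m p (J u) (J v))
      = ∑ u, ∑ v, ∑ u', ∑ v', (M u v * (M u' v' * ((if v = u' then (1:ℝ) else 0) + ρ u'))) •
          Ep m p (J u) (J v') := by
        rw [Finset.sum_mul_sum]
        refine Finset.sum_congr rfl fun u _ => ?_
        simp only [Finset.sum_mul_sum]
        rw [Finset.sum_comm]
        exact Finset.sum_congr rfl fun v _ => Finset.sum_congr rfl fun u' _ =>
          Finset.sum_congr rfl fun v' _ => expand u v u' v'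
    _ = ∑ u, ∑ v', M u v' • Ep m p (J u) (J v') := by
        refine Finset.sum_congr rfl fun u _ => ?_
        have swap1 : ∀ v : Fin d, ∑ u', ∑ v',
            (M u v * (M u' v' * ((if v = u' then (1:ℝ) else 0) + ρ u'))) • Ep m p (J u) (J v')
            = ∑ v', ∑ u', (M u v * (M u' v' * ((if v = u' then (1:ℝ) else 0) + ρ u'))) •
            Ep m p (J u) (J v') := by intro v; exact Finset.sum_comm ..

        simp only [swap1]
        rw [Finset.sum_comm]
        refine Finset.sum_congr rfl fun v' _ => ?_
        simp only [← Finset.sum_smul]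
        congr 1
        exact key_scalar d ρ hρ u v'

theorem exp_smul_idem {n : Type*} [Fintype n] [DecidableEq n]
    (P : Matrix n n ℝ) (hP : P * P = P) (c : ℝ) :
    exp (c • P) = 1 + (Real.exp c - 1) • P := by
  letI : NormedRing (Matrix n n ℝ) := Matrix.linftyOpNormedRing
  letI : NormedAlgebra ℝ (Matrix n n ℝ) := Matrix.linftyOpNormedAlgebra
  have hpow : ∀ k : ℕ, P ^ (k + 1) = P := by
    intro k; induction k with
    | zero => simp
    | succ k ih => rw [pow_succ, ih, hP]
  have hs : Summable fun k : ℕ => ((k ! : ℝ))⁻¹ • (c • P) ^ k :=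
    expSeries_summable' (𝕂 := ℝ) (c • P)
  rw [exp_eq_tsum ℝ]; beta_reduce
  rw [Summable.tsum_eq_zero_add hs]
  have h1 : ∀ k : ℕ, ((k + 1)! : ℝ)⁻¹ • (c • P) ^ (k + 1)
      = (c ^ (k + 1) / (k + 1)!) • P := by
    intro k
    rw [smul_pow, hpow, smul_smul]
    congr 1
    field_simp
  simp only [h1, pow_zero, Nat.factorial_zero, Nat.cast_one, inv_one, one_smul]
  have hsr : Summable fun k : ℕ => c ^ (k + 1) / (k + 1)! := by
    have := Real.summable_pow_div_factorial c
    exact ((summable_nat_add_iff 1).2 this)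
  rw [Summable.tsum_smul_const hsr]
  congr 1
  have hec : Real.exp c = ∑' k : ℕ, c ^ k / k ! := by
    rw [Real.exp_eq_exp_ℝ, exp_eq_tsum ℝ]
    simp [div_eq_inv_mul, smul_eq_mul]
  rw [hec, Summable.tsum_eq_zero_add (Real.summable_pow_div_factorial c)]
  simp

end helpers

open NormedSpace in
/-- for `ω ≠ 0` and `t ∈ ℝ`,
`exp(t A^{(p;ω)}_{(𝒥)}) = I + ((e^{ωt} − 1)/ω) A^{(p;ω)}_{(𝒥)}`. -/
theorem stmt14 (m d : ℕ) (hm : 1 ≤ m) (hd : 1 ≤ d) (p : Fin (m + 1) → ℝ)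
    (hp : ∀ a, 0 < p a) (hsum : ∑ a, p a = 1)
    (J : Fin d → Fin m) (hJ : Function.Injective J) (ω : ℝ) (hω : ω ≠ 0) (t : ℝ) :
    exp (t • AJ m d p J ω) =
      (1 : Matrix (Fin (m + 1)) (Fin (m + 1)) ℝ) +
        ((Real.exp (ω * t) - 1) / ω) • AJ m d p J ω := by
  set S := ∑ u, ∑ v, ((if J u = J v then (1:ℝ) else 0) -
      r m p (J v) / (1 + ∑ w, r m p (J w))) • Ep m p (J u) (J v) with hS
  have hSS : S * S = S := S_idem m d p hp J hJ
  have hA : AJ m d p J ω = ω • S := rfl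
  have h1 : t • AJ m d p J ω = (ω * t) • S := by rw [hA, smul_smul, mul_comm]
  rw [h1, exp_smul_idem S hSS (ω * t), hA, smul_smul]
  congr 2
  field_simp
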